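/- With the setup of the RS fractional-decoding construction, the polynomials h_0,...,h_{l-1} (each of degree < k) are uniquely determined by the polynomials g_0,...,g_{m-1}: if h_0,...,h_{l-1} and h'_0,...,h'_{l-1} are two families of polynomials of degree < k over B such that for all j = 0,...,m-1, h_{l-m+j}·p_j^{l-m} + Σ_{u=0}^{l-m-1} h_u·p_j^u = h'_{l-m+j}·p_j^{l-m} + Σ_{u=0}^{l-m-1} h'_u·p_j^u, then h_u = h'_u for all u = 0,...,l-1. -/

import Mathlib

/-- Uniqueness in the RS fractional-decoding construction: with `B` a field, `m ∣ k`,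
`m ≤ l`, pairwise disjoint sets `A j ⊆ B` of size `k/m` with annihilators
`p j = ∏_{ω ∈ A j} (x - ω)`, the polynomials `h 0, …, h (l-1)` of degree `< k` are
uniquely determined by the polynomials
`g j = h (l-m+j) * (p j)^(l-m) + ∑_{u=0}^{l-m-1} h u * (p j)^u`: if two families give
the same `g j` for all `j`, then they coincide. -/
theorem h_determined_by_g {B : Type*} [Field B]
    {m l k : ℕ} (hm : 0 < m) (hml : m ≤ l) (hmk : m ∣ k)
    (A : Fin m → Finset B)
    (hdisj : ∀ j j' : Fin m, j ≠ j' → Disjoint (A j) (A j'))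
    (hAcard : ∀ j : Fin m, (A j).card = k / m)
    (h h' : ℕ → Polynomial B)
    (hdeg : ∀ u, u < l → (h u).degree < (k : ℕ))
    (hdeg' : ∀ u, u < l → (h' u).degree < (k : ℕ))
    (hg : ∀ j : Fin m,
      h (l - m + (j : ℕ)) *
          (∏ ω ∈ A j, (Polynomial.X - Polynomial.C ω)) ^ (l - m) +
        ∑ u ∈ Finset.range (l - m),
          h u * (∏ ω ∈ A j, (Polynomial.X - Polynomial.C ω)) ^ u =
      h' (l - m + (j : ℕ)) *
          (∏ ω ∈ A j, (Polynomial.X - Polynomial.C ω)) ^ (l - m) +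
        ∑ u ∈ Finset.range (l - m),
          h' u * (∏ ω ∈ A j, (Polynomial.X - Polynomial.C ω)) ^ u) :
    ∀ u, u < l → h u = h' u := by
  classical
  set P : Fin m → Polynomial B := fun j => ∏ ω ∈ A j, (Polynomial.X - Polynomial.C ω) with hPdef
  set f : ℕ → Polynomial B := fun u => h u - h' u with hfdef
  have hPmonic : ∀ j, (P j).Monic := fun j =>
    Polynomial.monic_prod_of_monic _ _ fun ω _ => Polynomial.monic_X_sub_C ω
  have hPne : ∀ j, P j ≠ 0 := fun j => (hPmonic j).ne_zero
  have hPdeg : ∀ j, (P j).natDegree = k / m := by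
    intro j
    rw [hPdef, Polynomial.natDegree_prod _ _ (fun ω _ => Polynomial.X_sub_C_ne_zero ω)]
    simp [Polynomial.natDegree_X_sub_C, hAcard j]
  have hcop : Pairwise (Function.onFun IsCoprime P) := by
    intro j j' hjj'
    refine IsCoprime.prod_left fun a ha => IsCoprime.prod_right fun b hb => ?_
    refine Polynomial.isCoprime_X_sub_C_of_isUnit_sub (isUnit_iff_ne_zero.mpr (sub_ne_zero.mpr ?_))
    intro hab
    exact (Finset.disjoint_left.mp (hdisj j j' hjj') ha) (hab ▸ hb)
  -- total product
  have hQmonic : (∏ j, P j).Monic := Polynomial.monic_prod_of_monic _ _ fun j _ => hPmonic j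
  have hQdeg : (∏ j, P j).degree = (k : ℕ) := by
    rw [Polynomial.degree_eq_natDegree hQmonic.ne_zero, Polynomial.natDegree_prod _ _ (fun j _ => hPne j)]
    simp only [hPdeg]
    rw [Finset.sum_const, Finset.card_univ, Fintype.card_fin, smul_eq_mul,
      Nat.mul_div_cancel' hmk]
  have hfdeg : ∀ u, u < l → (f u).degree < (k : ℕ) := by
    intro u hu
    exact lt_of_le_of_lt (Polynomial.degree_sub_le _ _) (max_lt (hdeg u hu) (hdeg' u hu))
  have hE : ∀ j : Fin m,
      f (l - m + (j : ℕ)) * P j ^ (l - m) + ∑ u ∈ Finset.range (l - m), f u * P j ^ u = 0 := by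
    intro j
    simp only [hfdef, sub_mul, Finset.sum_sub_distrib]
    linear_combination (hg j)
  have key : ∀ t, t < l - m → f t = 0 := by
    intro t
    induction t using Nat.strong_induction_on with
    | _ t ih =>
      intro ht
      have hdvd : ∀ j, P j ∣ f t := by
        intro j
        have hEj := hE j
        have hsplit : ∑ u ∈ Finset.range (l - m), f u * P j ^ u
            = f t * P j ^ t + ∑ u ∈ Finset.Ico (t + 1) (l - m), f u * P j ^ u := by
          rw [Finset.range_eq_Ico, ← Finset.sum_Ico_consecutive _ (Nat.zero_le (t + 1)) ht]
          congr 1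
          have : ∑ u ∈ Finset.Ico 0 (t + 1), f u * P j ^ u
              = ∑ u ∈ Finset.range (t + 1), f u * P j ^ u := by
            rw [Finset.range_eq_Ico]
          rw [this, Finset.sum_range_succ, Finset.sum_eq_zero, zero_add]
          intro u hu
          rw [ih u (Finset.mem_range.mp hu) (lt_trans (Finset.mem_range.mp hu) ht), zero_mul]
        rw [hsplit] at hEj
        have heq : f t * P j ^ t
            = -(f (l - m + (j : ℕ)) * P j ^ (l - m)
              + ∑ u ∈ Finset.Ico (t + 1) (l - m), f u * P j ^ u) := by
          linear_combination hEj
        have hdvd1 : P j ^ (t + 1) ∣ f t * P j ^ t := by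
          rw [heq]
          refine dvd_neg.mpr (dvd_add ?_ ?_)
          · exact Dvd.dvd.mul_left (pow_dvd_pow _ ht) _
          · refine Finset.dvd_sum fun u hu => ?_
            exact Dvd.dvd.mul_left (pow_dvd_pow _ (Finset.mem_Ico.mp hu).1) _
        obtain ⟨c, hc⟩ := hdvd1
        refine ⟨c, ?_⟩
        have : P j ^ t * f t = P j ^ t * (P j * c) := by
          rw [pow_succ] at hc
          linear_combination hc
        exact mul_left_cancel₀ (pow_ne_zero t (hPne j)) this
      have hQdvd : (∏ j, P j) ∣ f t := Fintype.prod_dvd_of_coprime hcop hdvd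
      exact Polynomial.eq_zero_of_dvd_of_degree_lt hQdvd
        (by rw [hQdeg]; exact hfdeg t (lt_of_lt_of_le ht (Nat.sub_le l m)))
  have hall : ∀ u, u < l → f u = 0 := by
    intro u hu
    by_cases hcase : u < l - m
    · exact key u hcase
    · have hj : u - (l - m) < m := by omega
      have hEj := hE ⟨u - (l - m), hj⟩
      rw [Finset.sum_eq_zero (fun v hv => by
        rw [key v (Finset.mem_range.mp hv), zero_mul]), add_zero] at hEj
      have hu' : l - m + ((⟨u - (l - m), hj⟩ : Fin m) : ℕ) = u := by simp; omega
      rw [hu'] at hEj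
      exact (mul_eq_zero.mp hEj).resolve_right (pow_ne_zero _ (hPne _))
  intro u hu
  exact sub_eq_zero.mp (hall u hu)
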